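/- Let λ ∈ ℝ^N. For all m, m' with 3 ≤ m ≤ N and 3 ≤ m' ≤ N, the left Casimir functions C^[m] and C^[m'] are in involution with respect to the canonical Poisson bracket on ℝ^N × ℝ^N: at every point (q,p), Σ_{i=1}^N ( ∂C^[m]/∂qᵢ · ∂C^[m']/∂pᵢ − ∂C^[m]/∂pᵢ · ∂C^[m']/∂qᵢ ) = 0. -/

import Mathlib

/-- The angular-momentum-type function
`L_{ijk}(q,p) = λᵢ(p_j q_k − p_k q_j) + λ_j(p_k q_i − p_i q_k) + λ_k(p_i q_j − p_j q_i)`. -/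
noncomputable def Lfun {N : ℕ} (lam : Fin N → ℝ) (i j k : Fin N) (q p : Fin N → ℝ) : ℝ :=
  lam i * (p j * q k - p k * q j) + lam j * (p k * q i - p i * q k)
    + lam k * (p i * q j - p j * q i)

/-- The left Casimir function `C^[m](q,p) = Σ_{1≤i<j<k≤m} L_{ijk}(q,p)²`. -/
noncomputable def leftCas {N : ℕ} (lam : Fin N → ℝ) (m : ℕ) (q p : Fin N → ℝ) : ℝ :=
  ∑ t ∈ Finset.univ.filter (fun t : Fin N × Fin N × Fin N =>
      t.1 < t.2.1 ∧ t.2.1 < t.2.2 ∧ (t.2.2 : ℕ) < m),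
    (Lfun lam t.1 t.2.1 t.2.2 q p) ^ 2

/-- Partial derivative of `f(q,p)` with respect to `qᵢ`. -/
noncomputable def pdq {N : ℕ} (f : (Fin N → ℝ) → (Fin N → ℝ) → ℝ) (i : Fin N)
    (q p : Fin N → ℝ) : ℝ :=
  deriv (fun t => f (Function.update q i t) p) (q i)

/-- Partial derivative of `f(q,p)` with respect to `pᵢ`. -/
noncomputable def pdp {N : ℕ} (f : (Fin N → ℝ) → (Fin N → ℝ) → ℝ) (i : Fin N)
    (q p : Fin N → ℝ) : ℝ :=
  deriv (fun t => f q (Function.update p i t)) (p i)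
open Finset

noncomputable def Spr {N : ℕ} (x y : Fin N → ℝ) (m : ℕ) : ℝ :=
  ∑ i ∈ Finset.univ.filter (fun i : Fin N => (i : ℕ) < m), x i * y i

noncomputable def Gpoly (a b c d e f : ℝ) : ℝ :=
  a * (d * f - e ^ 2) - b * (b * f - c * e) + c * (b * e - c * d)

lemma spr_comm {N : ℕ} (x y : Fin N → ℝ) (m : ℕ) : Spr x y m = Spr y x m := by
  simp [Spr, mul_comm]

lemma pairLagrange {N : ℕ} (x y z w : Fin N → ℝ) (m : ℕ) :
    ∑ t ∈ Finset.univ.filter (fun t : Fin N × Fin N => t.1 < t.2 ∧ (t.2 : ℕ) < m),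
      (x t.1 * y t.2 - x t.2 * y t.1) * (z t.1 * w t.2 - z t.2 * w t.1)
    = Spr x z m * Spr y w m - Spr x w m * Spr y z m := by
  classical
  set A : Finset (Fin N) := Finset.univ.filter (fun i : Fin N => (i : ℕ) < m) with hA
  set F : Fin N × Fin N → ℝ := fun t =>
    (x t.1 * y t.2 - x t.2 * y t.1) * (z t.1 * w t.2 - z t.2 * w t.1) with hF
  have hD : ∑ t ∈ A ×ˢ A, F t
      = 2 * (Spr x z m * Spr y w m - Spr x w m * Spr y z m) := by
    have h1 : ∑ t ∈ A ×ˢ A, F t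
        = ∑ i ∈ A, ∑ j ∈ A,
            ((x i * z i) * (y j * w j) + (x j * z j) * (y i * w i)
              - (x i * w i) * (y j * z j) - (x j * w j) * (y i * z i)) := by
      rw [Finset.sum_product]
      exact Finset.sum_congr rfl fun i _ => Finset.sum_congr rfl fun j _ => by
        simp only [hF]; ring
    rw [h1]
    simp only [Finset.sum_sub_distrib, Finset.sum_add_distrib, ← Finset.mul_sum,
      ← Finset.sum_mul]
    simp only [Spr, ← hA]
    ring
  have hset : Finset.univ.filter (fun t : Fin N × Fin N => t.1 < t.2 ∧ (t.2 : ℕ) < m)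
      = (A ×ˢ A).filter (fun t => t.1 < t.2) := by
    ext t
    simp only [Finset.mem_filter, Finset.mem_univ, true_and, Finset.mem_product, hA,
      Fin.lt_def]
    omega
  have hswap : ∑ t ∈ (A ×ˢ A).filter (fun t => t.2 < t.1), F t
      = ∑ t ∈ (A ×ˢ A).filter (fun t => t.1 < t.2), F t := by
    refine Finset.sum_nbij' (fun t => t.swap) (fun t => t.swap) ?_ ?_ ?_ ?_ ?_
    · intro t ht
      simp only [Finset.mem_filter, Finset.mem_product] at ht ⊢
      exact ⟨⟨ht.1.2, ht.1.1⟩, ht.2⟩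
    · intro t ht
      simp only [Finset.mem_filter, Finset.mem_product] at ht ⊢
      exact ⟨⟨ht.1.2, ht.1.1⟩, ht.2⟩
    · intro t _; rfl
    · intro t _; rfl
    · intro t _; simp only [hF, Prod.fst_swap, Prod.snd_swap]; ring
  have hnotlt : ∑ t ∈ (A ×ˢ A).filter (fun t => ¬ t.1 < t.2), F t
      = ∑ t ∈ (A ×ˢ A).filter (fun t => t.2 < t.1), F t := by
    rw [eq_comm]
    refine Finset.sum_subset ?_ ?_
    · intro t ht
      simp only [Finset.mem_filter] at ht ⊢
      exact ⟨ht.1, not_lt_of_gt ht.2⟩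
    · intro t ht hnt
      simp only [Finset.mem_filter] at ht hnt
      have h2 : ¬ t.2 < t.1 := fun h => hnt ⟨ht.1, h⟩
      have : t.1 = t.2 := le_antisymm (not_lt.mp h2) (not_lt.mp ht.2)
      simp only [hF, this]; ring
  have hhalf : ∑ t ∈ A ×ˢ A, F t
      = 2 * ∑ t ∈ (A ×ˢ A).filter (fun t => t.1 < t.2), F t := by
    rw [← Finset.sum_filter_add_sum_filter_not (A ×ˢ A) (fun t => t.1 < t.2) F,
      hnotlt, hswap]
    ring
  rw [hset]
  have := hD
  rw [hhalf] at this
  linarith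

lemma gramRepr {N : ℕ} (lam : Fin N → ℝ) (m : ℕ) (hmN : m ≤ N) (q p : Fin N → ℝ) :
    leftCas lam m q p
      = Gpoly (Spr lam lam m) (Spr lam p m) (Spr lam q m)
          (Spr p p m) (Spr p q m) (Spr q q m) := by
  classical
  induction m with
  | zero =>
    simp [leftCas, Spr, Gpoly]
  | succ m ih =>
    have hm : m < N := hmN
    have hmN' : m ≤ N := Nat.le_of_succ_le hmN
    set im : Fin N := ⟨m, hm⟩ with him
    -- truncated sums at level m+1
    have hins : (Finset.univ.filter (fun i : Fin N => (i : ℕ) < m + 1))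
        = insert im (Finset.univ.filter (fun i : Fin N => (i : ℕ) < m)) := by
      ext i
      simp only [Finset.mem_filter, Finset.mem_univ, true_and, Finset.mem_insert,
        Fin.ext_iff, him]
      omega
    have hS : ∀ x y : Fin N → ℝ, Spr x y (m + 1) = Spr x y m + x im * y im := by
      intro x y
      rw [Spr, hins, Finset.sum_insert (by simp [him]), Spr]
      ring
    -- split the triple sum
    have hsplit : (Finset.univ.filter (fun t : Fin N × Fin N × Fin N =>
          t.1 < t.2.1 ∧ t.2.1 < t.2.2 ∧ (t.2.2 : ℕ) < m + 1))
        = (Finset.univ.filter (fun t : Fin N × Fin N × Fin N =>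
            t.1 < t.2.1 ∧ t.2.1 < t.2.2 ∧ (t.2.2 : ℕ) < m))
          ∪ (Finset.univ.filter (fun t : Fin N × Fin N × Fin N =>
            t.1 < t.2.1 ∧ t.2.1 < t.2.2 ∧ t.2.2 = im)) := by
      ext t
      simp only [Finset.mem_filter, Finset.mem_univ, true_and, Finset.mem_union,
        Fin.lt_def, Fin.ext_iff, him]
      omega
    have hdisj : Disjoint
        (Finset.univ.filter (fun t : Fin N × Fin N × Fin N =>
            t.1 < t.2.1 ∧ t.2.1 < t.2.2 ∧ (t.2.2 : ℕ) < m))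
        (Finset.univ.filter (fun t : Fin N × Fin N × Fin N =>
            t.1 < t.2.1 ∧ t.2.1 < t.2.2 ∧ t.2.2 = im)) := by
      rw [Finset.disjoint_left]
      intro t ht ht'
      simp only [Finset.mem_filter, Finset.mem_univ, true_and, Fin.ext_iff, him] at ht ht'
      omega
    have hnew : ∑ t ∈ Finset.univ.filter (fun t : Fin N × Fin N × Fin N =>
          t.1 < t.2.1 ∧ t.2.1 < t.2.2 ∧ t.2.2 = im),
          (Lfun lam t.1 t.2.1 t.2.2 q p) ^ 2
        = ∑ s ∈ Finset.univ.filter (fun s : Fin N × Fin N => s.1 < s.2 ∧ (s.2 : ℕ) < m),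
          (Lfun lam s.1 s.2 im q p) ^ 2 := by
      refine Finset.sum_nbij' (fun t => (t.1, t.2.1)) (fun s => (s.1, s.2, im)) ?_ ?_ ?_ ?_ ?_
      · intro t ht
        simp only [Finset.mem_filter, Finset.mem_univ, true_and, Fin.lt_def,
          Fin.ext_iff, him, Fin.val_mk] at ht ⊢
        omega
      · intro s hs
        simp only [Finset.mem_filter, Finset.mem_univ, true_and, Fin.lt_def,
          Fin.ext_iff, him, Fin.val_mk, and_true] at hs ⊢
        omega
      · intro t ht
        simp only [Finset.mem_filter, Finset.mem_univ, true_and] at ht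
        rw [← ht.2.2]
      · intro s _; rfl
      · intro t ht
        simp only [Finset.mem_filter, Finset.mem_univ, true_and] at ht
        rw [ht.2.2]
    have hexp : ∑ s ∈ Finset.univ.filter (fun s : Fin N × Fin N => s.1 < s.2 ∧ (s.2 : ℕ) < m),
          (Lfun lam s.1 s.2 im q p) ^ 2
        = (lam im * lam im) * (Spr p p m * Spr q q m - Spr p q m * Spr q p m)
          + (p im * p im) * (Spr lam lam m * Spr q q m - Spr lam q m * Spr q lam m)
          + (q im * q im) * (Spr lam lam m * Spr p p m - Spr lam p m * Spr p lam m)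
          - (2 * (lam im * p im)) * (Spr p lam m * Spr q q m - Spr p q m * Spr q lam m)
          + (2 * (lam im * q im)) * (Spr p lam m * Spr q p m - Spr p p m * Spr q lam m)
          - (2 * (p im * q im)) * (Spr lam lam m * Spr q p m - Spr lam p m * Spr q lam m) := by
      rw [← pairLagrange p q p q m, ← pairLagrange lam q lam q m,
        ← pairLagrange lam p lam p m, ← pairLagrange p q lam q m,
        ← pairLagrange p q lam p m, ← pairLagrange lam q lam p m]
      simp only [Finset.mul_sum, ← Finset.sum_sub_distrib, ← Finset.sum_add_distrib]
      refine Finset.sum_congr rfl fun s _ => ?_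
      simp only [Lfun]
      ring
    rw [leftCas, hsplit, Finset.sum_union hdisj, hnew, hexp, ← leftCas, ih hmN',
      hS lam lam, hS lam p, hS lam q, hS p p, hS p q, hS q q,
      spr_comm q p, spr_comm q lam, spr_comm p lam]
    simp only [Gpoly]
    ring

lemma quadAt (u0 u1 u2 t0 : ℝ) :
    HasDerivAt (fun t : ℝ => u0 + u1 * t + u2 * t ^ 2) (u1 + 2 * u2 * t0) t0 := by
  have h := (((hasDerivAt_id t0).const_mul u1).const_add u0).add
    ((hasDerivAt_pow 2 t0).const_mul u2)
  exact h.congr_deriv (by push_cast; ring)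

lemma hasDerivAt_Gpoly (a0 a1 a2 b0 b1 b2 c0 c1 c2 d0 d1 d2 e0 e1 e2 f0 f1 f2 t0 : ℝ) :
    HasDerivAt (fun t : ℝ => Gpoly (a0 + a1 * t + a2 * t ^ 2) (b0 + b1 * t + b2 * t ^ 2)
        (c0 + c1 * t + c2 * t ^ 2) (d0 + d1 * t + d2 * t ^ 2) (e0 + e1 * t + e2 * t ^ 2)
        (f0 + f1 * t + f2 * t ^ 2))
      (((d0 + d1 * t0 + d2 * t0 ^ 2) * (f0 + f1 * t0 + f2 * t0 ^ 2) - (e0 + e1 * t0 + e2 * t0 ^ 2) ^ 2) * (a1 + 2 * a2 * t0) + (2 * (c0 + c1 * t0 + c2 * t0 ^ 2) * (e0 + e1 * t0 + e2 * t0 ^ 2) - 2 * (b0 + b1 * t0 + b2 * t0 ^ 2) * (f0 + f1 * t0 + f2 * t0 ^ 2)) * (b1 + 2 * b2 * t0) + (2 * (b0 + b1 * t0 + b2 * t0 ^ 2) * (e0 + e1 * t0 + e2 * t0 ^ 2) - 2 * (c0 + c1 * t0 + c2 * t0 ^ 2) * (d0 + d1 * t0 + d2 * t0 ^ 2)) *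 (c1 + 2 * c2 * t0) + ((a0 + a1 * t0 + a2 * t0 ^ 2) * (f0 + f1 * t0 + f2 * t0 ^ 2) - (c0 + c1 * t0 + c2 * t0 ^ 2) ^ 2) * (d1 + 2 * d2 * t0) + (2 * (b0 + b1 * t0 + b2 * t0 ^ 2) * (c0 + c1 * t0 + c2 * t0 ^ 2) - 2 * (a0 + a1 * t0 + a2 * t0 ^ 2) * (e0 + e1 * t0 + e2 * t0 ^ 2)) * (e1 + 2 * e2 * t0) + ((a0 + a1 * t0 + a2 * t0 ^ 2) * (d0 + d1 * t0 + d2 * t0 ^ 2) - (b0 + b1 * t0 + b2 * t0 ^ 2) ^ 2) * (f1 + 2 * f2 * t0)) t0 := by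
  have hA := quadAt a0 a1 a2 t0
  have hB := quadAt b0 b1 b2 t0
  have hC := quadAt c0 c1 c2 t0
  have hD := quadAt d0 d1 d2 t0
  have hE := quadAt e0 e1 e2 t0
  have hF := quadAt f0 f1 f2 t0
  have H := ((hA.mul ((hD.mul hF).sub (hE.pow 2))).sub
      (hB.mul ((hB.mul hF).sub (hC.mul hE)))).add
    (hC.mul ((hB.mul hE).sub (hC.mul hD)))
  exact H.congr_deriv (by simp only [Pi.mul_apply, Pi.sub_apply, Pi.pow_apply]; push_cast; ring)

lemma sprU {N m : ℕ} {i : Fin N} (h : (i : ℕ) < m) (x q : Fin N → ℝ) (t : ℝ) :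
    Spr x (Function.update q i t) m = (Spr x q m - x i * q i) + x i * t := by
  classical
  have hi : i ∈ Finset.univ.filter (fun j : Fin N => (j : ℕ) < m) := by simp [h]
  rw [Spr, ← Finset.sum_erase_add _ _ hi, Spr, ← Finset.sum_erase_add _ _ hi]
  have h1 : ∀ j ∈ (Finset.univ.filter (fun j : Fin N => (j : ℕ) < m)).erase i,
      x j * Function.update q i t j = x j * q j := by
    intro j hj
    rw [Function.update_of_ne (Finset.ne_of_mem_erase hj)]
  rw [Finset.sum_congr rfl h1, Function.update_self]
  ring

lemma sprUU {N m : ℕ} {i : Fin N} (h : (i : ℕ) < m) (q : Fin N → ℝ) (t : ℝ) :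
    Spr (Function.update q i t) (Function.update q i t) m
      = (Spr q q m - q i * q i) + t ^ 2 := by
  classical
  have hi : i ∈ Finset.univ.filter (fun j : Fin N => (j : ℕ) < m) := by simp [h]
  rw [Spr, ← Finset.sum_erase_add _ _ hi, Spr, ← Finset.sum_erase_add _ _ hi]
  have h1 : ∀ j ∈ (Finset.univ.filter (fun j : Fin N => (j : ℕ) < m)).erase i,
      Function.update q i t j * Function.update q i t j = q j * q j := by
    intro j hj
    rw [Function.update_of_ne (Finset.ne_of_mem_erase hj)]
  rw [Finset.sum_congr rfl h1, Function.update_self]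
  ring

lemma sprU_not {N m : ℕ} {i : Fin N} (h : ¬ (i : ℕ) < m) (x q : Fin N → ℝ) (t : ℝ) :
    Spr x (Function.update q i t) m = Spr x q m := by
  refine Finset.sum_congr rfl fun j hj => ?_
  simp only [Finset.mem_filter] at hj
  rw [Function.update_of_ne (by rintro rfl; exact h hj.2)]

lemma sprUU_not {N m : ℕ} {i : Fin N} (h : ¬ (i : ℕ) < m) (q : Fin N → ℝ) (t : ℝ) :
    Spr (Function.update q i t) (Function.update q i t) m = Spr q q m := by
  refine Finset.sum_congr rfl fun j hj => ?_
  simp only [Finset.mem_filter] at hj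
  rw [Function.update_of_ne (by rintro rfl; exact h hj.2)]

lemma pdq_not {N m : ℕ} (lam : Fin N → ℝ) (hmN : m ≤ N) {i : Fin N} (h : ¬ (i : ℕ) < m)
    (q p : Fin N → ℝ) : pdq (leftCas lam m) i q p = 0 := by
  simp only [pdq]
  have hfun : (fun t => leftCas lam m (Function.update q i t) p)
      = fun _ : ℝ => leftCas lam m q p := by
    funext t
    rw [gramRepr lam m hmN (Function.update q i t) p, sprU_not h lam q t, sprU_not h p q t,
      sprUU_not h q t, gramRepr lam m hmN q p]
  rw [hfun]
  exact deriv_const _ _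

lemma pdp_not {N m : ℕ} (lam : Fin N → ℝ) (hmN : m ≤ N) {i : Fin N} (h : ¬ (i : ℕ) < m)
    (q p : Fin N → ℝ) : pdp (leftCas lam m) i q p = 0 := by
  simp only [pdp]
  have hfun : (fun t => leftCas lam m q (Function.update p i t))
      = fun _ : ℝ => leftCas lam m q p := by
    funext t
    rw [gramRepr lam m hmN q (Function.update p i t), sprU_not h lam p t,
      sprUU_not h p t, spr_comm (Function.update p i t) q m, sprU_not h q p t,
      spr_comm q p m, gramRepr lam m hmN q p]
  rw [hfun]
  exact deriv_const _ _

lemma pdq_formula {N m : ℕ} (lam : Fin N → ℝ) (hmN : m ≤ N) {i : Fin N} (h : (i : ℕ) < m)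
    (q p : Fin N → ℝ) :
    pdq (leftCas lam m) i q p
      = (2 * (Spr lam p m * Spr p q m - Spr lam q m * Spr p p m)) * lam i
        + (2 * Spr lam p m * Spr lam q m - 2 * Spr lam lam m * Spr p q m) * p i
        + (2 * (Spr lam lam m * Spr p p m - Spr lam p m ^ 2)) * q i := by
  simp only [pdq]
  have hfun : (fun t => leftCas lam m (Function.update q i t) p)
      = fun t : ℝ => Gpoly (Spr lam lam m + 0 * t + 0 * t ^ 2)
          (Spr lam p m + 0 * t + 0 * t ^ 2)
          (Spr lam q m - lam i * q i + lam i * t + 0 * t ^ 2)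
          (Spr p p m + 0 * t + 0 * t ^ 2)
          (Spr p q m - p i * q i + p i * t + 0 * t ^ 2)
          (Spr q q m - q i * q i + 0 * t + 1 * t ^ 2) := by
    funext t
    rw [gramRepr lam m hmN (Function.update q i t) p, sprU h lam q t, sprU h p q t,
      sprUU h q t]
    simp only [Gpoly]
    ring
  rw [hfun, (hasDerivAt_Gpoly (Spr lam lam m) 0 0 (Spr lam p m) 0 0
    (Spr lam q m - lam i * q i) (lam i) 0 (Spr p p m) 0 0
    (Spr p q m - p i * q i) (p i) 0 (Spr q q m - q i * q i) 0 1 (q i)).deriv]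
  ring

lemma pdp_formula {N m : ℕ} (lam : Fin N → ℝ) (hmN : m ≤ N) {i : Fin N} (h : (i : ℕ) < m)
    (q p : Fin N → ℝ) :
    pdp (leftCas lam m) i q p
      = (2 * (Spr lam q m * Spr p q m - Spr lam p m * Spr q q m)) * lam i
        + (2 * (Spr lam lam m * Spr q q m - Spr lam q m ^ 2)) * p i
        + (2 * Spr lam p m * Spr lam q m - 2 * Spr lam lam m * Spr p q m) * q i := by
  simp only [pdp]
  have hfun : (fun t => leftCas lam m q (Function.update p i t))
      = fun t : ℝ => Gpoly (Spr lam lam m + 0 * t + 0 * t ^ 2)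
          (Spr lam p m - lam i * p i + lam i * t + 0 * t ^ 2)
          (Spr lam q m + 0 * t + 0 * t ^ 2)
          (Spr p p m - p i * p i + 0 * t + 1 * t ^ 2)
          (Spr q p m - q i * p i + q i * t + 0 * t ^ 2)
          (Spr q q m + 0 * t + 0 * t ^ 2) := by
    funext t
    rw [gramRepr lam m hmN q (Function.update p i t), sprU h lam p t, sprUU h p t,
      spr_comm (Function.update p i t) q m, sprU h q p t]
    simp only [Gpoly]
    ring
  rw [hfun, (hasDerivAt_Gpoly (Spr lam lam m) 0 0 (Spr lam p m - lam i * p i) (lam i) 0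
    (Spr lam q m) 0 0 (Spr p p m - p i * p i) 0 1
    (Spr q p m - q i * p i) (q i) 0 (Spr q q m) 0 0 (p i)).deriv,
    spr_comm q p m]
  ring

lemma sum_trinomial_bracket {N : ℕ} (m : ℕ) (lam q p : Fin N → ℝ)
    (P1 P2 P3 Q1 Q2 Q3 R1 R2 R3 S1 S2 S3 : ℝ) :
    ∑ i ∈ Finset.univ.filter (fun i : Fin N => (i : ℕ) < m),
      ((P1 * lam i + P2 * p i + P3 * q i) * (R1 * lam i + R2 * p i + R3 * q i)
        - (Q1 * lam i + Q2 * p i + Q3 * q i) * (S1 * lam i + S2 * p i + S3 * q i))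
    = (P1 * R1 - Q1 * S1) * Spr lam lam m
      + (P1 * R2 + P2 * R1 - Q1 * S2 - Q2 * S1) * Spr lam p m
      + (P1 * R3 + P3 * R1 - Q1 * S3 - Q3 * S1) * Spr lam q m
      + (P2 * R2 - Q2 * S2) * Spr p p m
      + (P2 * R3 + P3 * R2 - Q2 * S3 - Q3 * S2) * Spr p q m
      + (P3 * R3 - Q3 * S3) * Spr q q m := by
  simp only [Spr, Finset.mul_sum, ← Finset.sum_add_distrib]
  exact Finset.sum_congr rfl fun i _ => by ring

lemma key {N : ℕ} (lam : Fin N → ℝ) (m m' : ℕ) (hmm' : m ≤ m') (hm'N : m' ≤ N)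
    (q p : Fin N → ℝ) :
    ∑ i : Fin N,
      (pdq (leftCas lam m) i q p * pdp (leftCas lam m') i q p
        - pdp (leftCas lam m) i q p * pdq (leftCas lam m') i q p) = 0 := by
  classical
  have hmN : m ≤ N := le_trans hmm' hm'N
  rw [← Finset.sum_filter_add_sum_filter_not Finset.univ (fun i : Fin N => (i : ℕ) < m)]
  have h2 : ∑ i ∈ Finset.univ.filter (fun i : Fin N => ¬ (i : ℕ) < m),
      (pdq (leftCas lam m) i q p * pdp (leftCas lam m') i q p
        - pdp (leftCas lam m) i q p * pdq (leftCas lam m') i q p) = 0 := by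
    refine Finset.sum_eq_zero fun i hi => ?_
    simp only [Finset.mem_filter] at hi
    rw [pdq_not lam hmN hi.2, pdp_not lam hmN hi.2]
    ring
  rw [h2, add_zero]
  have h1 : ∀ i ∈ Finset.univ.filter (fun i : Fin N => (i : ℕ) < m),
      pdq (leftCas lam m) i q p * pdp (leftCas lam m') i q p
        - pdp (leftCas lam m) i q p * pdq (leftCas lam m') i q p
      = ((2 * (Spr lam p m * Spr p q m - Spr lam q m * Spr p p m)) * lam i
          + (2 * Spr lam p m * Spr lam q m - 2 * Spr lam lam m * Spr p q m) * p i
          + (2 * (Spr lam lam m * Spr p p m - Spr lam p m ^ 2)) * q i)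
        * ((2 * (Spr lam q m' * Spr p q m' - Spr lam p m' * Spr q q m')) * lam i
          + (2 * (Spr lam lam m' * Spr q q m' - Spr lam q m' ^ 2)) * p i
          + (2 * Spr lam p m' * Spr lam q m' - 2 * Spr lam lam m' * Spr p q m') * q i)
        - ((2 * (Spr lam q m * Spr p q m - Spr lam p m * Spr q q m)) * lam i
          + (2 * (Spr lam lam m * Spr q q m - Spr lam q m ^ 2)) * p i
          + (2 * Spr lam p m * Spr lam q m - 2 * Spr lam lam m * Spr p q m) * q i)
        * ((2 * (Spr lam p m' * Spr p q m' - Spr lam q m' * Spr p p m')) * lam i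
          + (2 * Spr lam p m' * Spr lam q m' - 2 * Spr lam lam m' * Spr p q m') * p i
          + (2 * (Spr lam lam m' * Spr p p m' - Spr lam p m' ^ 2)) * q i) := by
    intro i hi
    simp only [Finset.mem_filter] at hi
    have him : (i : ℕ) < m := hi.2
    have him' : (i : ℕ) < m' := lt_of_lt_of_le him hmm'
    rw [pdq_formula lam hmN him, pdp_formula lam hm'N him', pdp_formula lam hmN him,
      pdq_formula lam hm'N him']
  rw [Finset.sum_congr rfl h1, sum_trinomial_bracket]
  ring

/-- For `3 ≤ m ≤ N` and `3 ≤ m' ≤ N`, the left Casimir functions `C^[m]` and `C^[m']`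
are in involution with respect to the canonical Poisson bracket
`{f,g} = Σᵢ (∂f/∂qᵢ ∂g/∂pᵢ − ∂f/∂pᵢ ∂g/∂qᵢ)` on `ℝ^N × ℝ^N`. -/
theorem leftCasimirs_in_involution (N : ℕ) (lam : Fin N → ℝ) (m m' : ℕ)
    (hm3 : 3 ≤ m) (hmN : m ≤ N) (hm'3 : 3 ≤ m') (hm'N : m' ≤ N)
    (q p : Fin N → ℝ) :
    ∑ i : Fin N,
      (pdq (leftCas lam m) i q p * pdp (leftCas lam m') i q p
        - pdp (leftCas lam m) i q p * pdq (leftCas lam m') i q p) = 0 := by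
  rcases le_total m m' with h | h
  · exact key lam m m' h hm'N q p
  · have h0 := key lam m' m h hmN q p
    have hterm : ∀ i : Fin N,
        pdq (leftCas lam m) i q p * pdp (leftCas lam m') i q p
          - pdp (leftCas lam m) i q p * pdq (leftCas lam m') i q p
        = -(pdq (leftCas lam m') i q p * pdp (leftCas lam m) i q p
            - pdp (leftCas lam m') i q p * pdq (leftCas lam m) i q p) := by
      intro i; ring
    rw [Finset.sum_congr rfl fun i _ => hterm i, Finset.sum_neg_distrib, h0, neg_zero]
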